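/- In the deformation setting, let Ω¹ be the free A-module with basis θ^k (k ∈ Fin n), regarded as a module with Leibniz operators via ∇_j(θ^i) = −Γ^i_{jk} θ^k for given elements Γ^i_{jk} ∈ A, and set d(a) := δ_k(a) θ^k. Assume the derivations commute pairwise (δ_i ∘ δ_j = δ_j ∘ δ_i) and the Poisson-compatibility condition δ_m(ω^{ij}) + ω^{kj} Γ^i_{km} + ω^{ik} Γ^j_{km} = 0 holds for all i, j, m. Let E be a module with Leibniz operators and define ∇_{Q(E)} : E₁ → Ω¹₁ ⊗_{A₁} E₁ by ∇_{Q(E)}(e) := q⁻¹(θ^k ⊗ ∇_{E,k}(e)) − (λ/2) ω^{ij} θ^k ⊗ [∇_{E,k}, ∇_{E,j}] ∇_{E,i}(e), extended λ-linearly, where q = q_{Ω¹,E}. Then: (i) ∇_{Q(E)}(a • e) = d(a) ⊗ e + a • ∇_{Q(E)}(e) for all a ∈ A₁ and e ∈ E₁ (left Leibniz rule over A₁); (ii) the formula σ_{Q(E)}(e ⊗ ξ) := ξ ⊗ e + λ ω^{ij} ∇_j(ξ) ⊗ ∇_{E,i}(e) + λ ω^{ij} ξ_j θ^k ⊗ [∇_{E,k},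 ∇_{E,i}](e), for ξ = ξ_j θ^j with ξ_j ∈ A, defines an A₁-bimodule map σ_{Q(E)} : E₁ ⊗_{A₁} Ω¹₁ → Ω¹₁ ⊗_{A₁} E₁ satisfying ∇_{Q(E)}(e • a) = ∇_{Q(E)}(e) • a + σ_{Q(E)}(e ⊗ d(a)). -/

import Mathlib

open scoped TensorProduct

namespace Stmt5

/-- The semiclassical data: derivations `δ_i` and an antisymmetric `ω^{ij}` with
entries in a commutative algebra `A` over a field `K` of characteristic zero. -/
structure DefData (K A : Type) [Field K] [CharZero K] [CommRing A] [Algebra K A]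
    (n : ℕ) where
  δ : Fin n → A → A
  ω : Fin n → Fin n → A
  δ_add : ∀ i a b, δ i (a + b) = δ i a + δ i b
  δ_leibniz : ∀ i a b, δ i (a * b) = a * δ i b + b * δ i a
  ω_anti : ∀ i j, ω i j = - ω j i

variable {K A : Type} [Field K] [CharZero K] [CommRing A] [Algebra K A] {n : ℕ}

/-- The scalar `1/2` in `A`. -/
noncomputable def half (K A : Type) [Field K] [CharZero K] [CommRing A] [Algebra K A] : A :=
  algebraMap K A (2⁻¹ : K)

/-- The deformed product on `A₁ = A ⊕ λA` (a pair `(a₀, a₁)` stands for `a₀ + λ a₁`,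
with `λ² = 0`):  `a • b = ab + (λ/2) ω^{ij} δ_i(a) δ_j(b)`, extended `λ`-bilinearly. -/
noncomputable def mul1 (D : DefData K A n) (a b : A × A) : A × A :=
  (a.1 * b.1,
   a.1 * b.2 + a.2 * b.1 + half K A * ∑ i, ∑ j, D.ω i j * D.δ i a.1 * D.δ j b.1)

/-- A module with Leibniz operators: an `A`-module `E` with additive maps `∇_{E,j}`
satisfying `∇_{E,j}(a e) = a ∇_{E,j} e + δ_j(a) e`. -/
structure LeibMod (D : DefData K A n) (E : Type) [AddCommGroup E] [Module A E] where
  nab : Fin n → E → E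
  nab_add : ∀ j e f, nab j (e + f) = nab j e + nab j f
  nab_smul : ∀ j a e, nab j (a • e) = a • nab j e + D.δ j a • e

variable {D : DefData K A n} {E : Type} [AddCommGroup E] [Module A E]

/-- Deformed left action of `A₁` on `E₁ = E ⊕ λE`:
`a • e = a e + (λ/2) ω^{ij} δ_i(a) ∇_{E,j}(e)`, extended `λ`-bilinearly. -/
noncomputable def lact (L : LeibMod D E) (a : A × A) (e : E × E) : E × E :=
  (a.1 • e.1,
   a.1 • e.2 + a.2 • e.1 + ∑ i, ∑ j, (half K A * D.ω i j * D.δ i a.1) • L.nab j e.1)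

/-- Deformed right action of `A₁` on `E₁ = E ⊕ λE`:
`e • a = a e − (λ/2) ω^{ij} δ_i(a) ∇_{E,j}(e)`, extended `λ`-bilinearly. -/
noncomputable def ract (L : LeibMod D E) (e : E × E) (a : A × A) : E × E :=
  (a.1 • e.1,
   a.1 • e.2 + a.2 • e.1 - ∑ i, ∑ j, (half K A * D.ω i j * D.δ i a.1) • L.nab j e.1)

variable {W : Type} [AddCommGroup W] [Module A W]

/-- The natural transformation `q_{V,W}` in the pair representation:
`q(v ⊗ w) = v ⊗_A w + (λ/2) ω^{ij} ∇_{V,i}(v) ⊗_A ∇_{W,j}(w)`, extended `λ`-bilinearly. -/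
noncomputable def qpair (LV : LeibMod D E) (LW : LeibMod D W)
    (v : E × E) (w : W × W) : (E ⊗[A] W) × (E ⊗[A] W) :=
  (v.1 ⊗ₜ[A] w.1,
   v.1 ⊗ₜ[A] w.2 + v.2 ⊗ₜ[A] w.1 +
     ∑ i, ∑ j, (half K A * D.ω i j) • (LV.nab i v.1 ⊗ₜ[A] LW.nab j w.1))

/-- The basis 1-forms `θ^k` of the free module `Ω¹ = Fin n → A`. -/
noncomputable def theta (k : Fin n) : Fin n → A := Pi.single k 1

/-- `d(a) = δ_k(a) θ^k`. -/
def dfun (D : DefData K A n) (a : A) : Fin n → A := fun k => D.δ k a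

/-- The representation (via `q_{Ω¹,E}`) of the quantised connection
`∇_{Q(E)}(e) = q⁻¹(θ^k ⊗ ∇_{E,k}(e)) − (λ/2) ω^{ij} θ^k ⊗ [∇_{E,k},∇_{E,j}] ∇_{E,i}(e)`,
extended `λ`-linearly; i.e. this is `q_{Ω¹,E} ∘ ∇_{Q(E)}`. -/
noncomputable def Nrep (LE : LeibMod D E) (e : E × E) :
    ((Fin n → A) ⊗[A] E) × ((Fin n → A) ⊗[A] E) :=
  (∑ k, theta k ⊗ₜ[A] LE.nab k e.1,
   ∑ k, theta k ⊗ₜ[A] LE.nab k e.2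
     - ∑ i, ∑ j, (half K A * D.ω i j) •
         ∑ k, theta k ⊗ₜ[A]
           (LE.nab k (LE.nab j (LE.nab i e.1)) - LE.nab j (LE.nab k (LE.nab i e.1))))

/-- The representation (via `q_{Ω¹,E}`) of the generalised braiding
`σ_{Q(E)}(e ⊗ ξ) = ξ ⊗ e + λ ω^{ij} ∇_j(ξ) ⊗ ∇_{E,i}(e)
  + λ ω^{ij} ξ_j θ^k ⊗ [∇_{E,k},∇_{E,i}](e)`, i.e. this is `q_{Ω¹,E} ∘ σ_{Q(E)}`. -/
noncomputable def SigmaRep (LΩ : LeibMod D (Fin n → A)) (LE : LeibMod D E)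
    (e : E × E) (ξ : (Fin n → A) × (Fin n → A)) :
    ((Fin n → A) ⊗[A] E) × ((Fin n → A) ⊗[A] E) :=
  qpair LΩ LE ξ e
    + (0,
       ∑ i, ∑ j, D.ω i j • (LΩ.nab j ξ.1 ⊗ₜ[A] LE.nab i e.1)
         + ∑ i, ∑ j, ∑ k, (D.ω i j * ξ.1 j) •
             (theta k ⊗ₜ[A] (LE.nab k (LE.nab i e.1) - LE.nab i (LE.nab k e.1))))
section Aux

variable {D : DefData K A n}

lemma δ_zero (D : DefData K A n) (i : Fin n) : D.δ i 0 = 0 := by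
  have h := D.δ_add i 0 0
  rw [add_zero] at h
  exact (add_eq_left.mp h.symm)

lemma δ_one (D : DefData K A n) (i : Fin n) : D.δ i 1 = 0 := by
  have h := D.δ_leibniz i 1 1
  rw [mul_one, one_mul] at h
  exact (add_eq_left.mp h.symm)

lemma half_add_half : (half K A) + half K A = 1 := by
  rw [half, ← map_add]
  norm_num

lemma two_mul_half : (2 : A) * half K A = 1 := by
  rw [two_mul, half_add_half]

lemma δ_half (D : DefData K A n) (i : Fin n) : D.δ i (half K A) = 0 := by
  have h2 : D.δ i (2 : A) = 0 := by
    have h21 : (2 : A) = 1 + 1 := by norm_num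
    rw [h21, D.δ_add, δ_one, add_zero]
  have h0 : (2:A) * D.δ i (half K A) = 0 := by
    have h := D.δ_leibniz i 2 (half K A)
    rw [two_mul_half, δ_one, h2, mul_zero, add_zero] at h
    exact h.symm ▸ rfl
  calc D.δ i (half K A) = (2 * half K A) * D.δ i (half K A) := by rw [two_mul_half, one_mul]
    _ = half K A * ((2:A) * D.δ i (half K A)) := by ring
    _ = 0 := by rw [h0, mul_zero]

section NabLemmas
variable {M : Type} [AddCommGroup M] [Module A M] (L : LeibMod D M)

lemma nab_zero (j : Fin n) : L.nab j 0 = 0 := by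
  have h := L.nab_add j 0 0
  rw [add_zero] at h
  exact (add_eq_left.mp h.symm)

lemma nab_neg (j : Fin n) (x : M) : L.nab j (-x) = - L.nab j x := by
  have h := L.nab_add j x (-x)
  rw [add_neg_cancel, nab_zero] at h
  exact (neg_eq_of_add_eq_zero_right h.symm).symm

lemma nab_sub (j : Fin n) (x y : M) : L.nab j (x - y) = L.nab j x - L.nab j y := by
  rw [sub_eq_add_neg, L.nab_add, nab_neg, sub_eq_add_neg]

lemma nab_sum {ι : Type*} (j : Fin n) (s : Finset ι) (f : ι → M) :
    L.nab j (∑ i ∈ s, f i) = ∑ i ∈ s, L.nab j (f i) := by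
  classical
  induction s using Finset.induction_on with
  | empty => simpa using nab_zero L j
  | insert _ _ h ih => rw [Finset.sum_insert h, Finset.sum_insert h, L.nab_add, ih]

end NabLemmas

section Phi
variable {M : Type} [AddCommGroup M] [Module A M]

/-- coefficient functional of the tensor product with the free module. -/
noncomputable def phi (m : Fin n) : ((Fin n → A) ⊗[A] M) →ₗ[A] M :=
  TensorProduct.lift (LinearMap.mk₂ A (fun ξ x => ξ m • x)
    (fun ξ η x => by simp [add_smul])
    (fun c ξ x => by simp [mul_smul])
    (fun ξ x y => by simp [smul_add])
    (fun c ξ x => by simp [smul_smul, mul_comm]))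

@[simp] lemma phi_tmul (m : Fin n) (ξ : Fin n → A) (x : M) :
    phi m (ξ ⊗ₜ[A] x) = ξ m • x := rfl

@[simp] lemma theta_apply (k m : Fin n) : (theta k : Fin n → A) m = if m = k then 1 else 0 := by
  simp [theta, Pi.single_apply]

lemma sum_coeff_theta (ξ : Fin n → A) : ∑ k, ξ k • (theta k : Fin n → A) = ξ := by
  funext m
  simp only [Finset.sum_apply, Pi.smul_apply, theta_apply, smul_eq_mul, mul_ite, mul_one, mul_zero]
  simp [Finset.sum_ite_eq]

lemma tensor_reconstruct (z : (Fin n → A) ⊗[A] M) :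
    ∑ m, (theta m : Fin n → A) ⊗ₜ[A] phi m z = z := by
  induction z using TensorProduct.induction_on with
  | zero => simp
  | tmul ξ x =>
      simp only [phi_tmul]
      calc ∑ m, (theta m : Fin n → A) ⊗ₜ[A] (ξ m • x)
          = ∑ m, (ξ m • (theta m : Fin n → A)) ⊗ₜ[A] x := by
            refine Finset.sum_congr rfl fun m _ => ?_
            rw [TensorProduct.smul_tmul]
        _ = (∑ m, ξ m • (theta m : Fin n → A)) ⊗ₜ[A] x := by
            rw [TensorProduct.sum_tmul]
        _ = ξ ⊗ₜ[A] x := by rw [sum_coeff_theta]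
  | add x y hx hy => simp only [map_add, TensorProduct.tmul_add, Finset.sum_add_distrib, hx, hy]

lemma tensor_ext {x y : (Fin n → A) ⊗[A] M} (h : ∀ m, phi m x = phi m y) : x = y := by
  rw [← tensor_reconstruct x, ← tensor_reconstruct y]
  exact Finset.sum_congr rfl fun m _ => by rw [h m]

@[simp] lemma δ_ite (D : DefData K A n) (i : Fin n) (P : Prop) [Decidable P] :
    D.δ i (if P then (1:A) else 0) = 0 := by
  split
  exacts [δ_one D i, δ_zero D i]

@[simp] lemma ite_one_smul {P : Prop} [Decidable P] (v : M) :
    (if P then (1:A) else 0) • v = if P then v else 0 := by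
  split <;> simp

@[simp] lemma sum_ite_smul (m : Fin n) (f : Fin n → M) :
    ∑ k, (if m = k then (1:A) else 0) • f k = f m := by
  simp only [ite_smul, one_smul, zero_smul]
  simp [Finset.sum_ite_eq]

@[simp] lemma sum_theta_smul (m : Fin n) (f : Fin n → M) :
    ∑ k, ((theta k : Fin n → A) m) • f k = f m := by
  simp only [theta_apply]
  exact sum_ite_smul m f

@[simp] lemma phi_sum_theta (m : Fin n) (f : Fin n → M) :
    phi m (∑ k, (theta k : Fin n → A) ⊗ₜ[A] f k) = f m := by
  simp only [map_sum, phi_tmul, theta_apply, ite_smul, one_smul, zero_smul]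
  simp [Finset.sum_ite_eq]

lemma sum3_swap13 {M : Type} [AddCommMonoid M] (f : Fin n → Fin n → Fin n → M) :
    (∑ x, ∑ y, ∑ z, f x y z) = ∑ x, ∑ y, ∑ z, f z y x := by
  calc (∑ x, ∑ y, ∑ z, f x y z) = ∑ x, ∑ z, ∑ y, f x y z :=
        Finset.sum_congr rfl fun x _ => Finset.sum_comm
    _ = ∑ z, ∑ x, ∑ y, f x y z := Finset.sum_comm
    _ = ∑ z, ∑ y, ∑ x, f x y z := Finset.sum_congr rfl fun z _ => Finset.sum_comm

lemma sum3_swap23 {M : Type} [AddCommMonoid M] (f : Fin n → Fin n → Fin n → M) :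
    (∑ x, ∑ y, ∑ z, f x y z) = ∑ x, ∑ y, ∑ z, f x z y :=
  Finset.sum_congr rfl fun x _ => Finset.sum_comm

lemma sum2_swap {M : Type} [AddCommMonoid M] (f : Fin n → Fin n → M) :
    (∑ x, ∑ y, f x y) = ∑ x, ∑ y, f y x := Finset.sum_comm

section Reindex
variable {M : Type} [AddCommMonoid M]

lemma sum2_congr (F G : Fin n → Fin n → M) (h : ∀ x y, F x y = G x y) :
    (∑ x, ∑ y, F x y) = ∑ x, ∑ y, G x y :=
  Finset.sum_congr rfl fun x _ => Finset.sum_congr rfl fun y _ => h x y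

lemma sum3_congr (F G : Fin n → Fin n → Fin n → M) (h : ∀ x y z, F x y z = G x y z) :
    (∑ x, ∑ y, ∑ z, F x y z) = ∑ x, ∑ y, ∑ z, G x y z :=
  Finset.sum_congr rfl fun x _ => Finset.sum_congr rfl fun y _ =>
    Finset.sum_congr rfl fun z _ => h x y z

lemma sum2_reindex (F G : Fin n → Fin n → M) (h : ∀ x y, F x y = G y x) :
    (∑ x, ∑ y, F x y) = ∑ x, ∑ y, G x y := by
  calc (∑ x, ∑ y, F x y) = ∑ x, ∑ y, G y x := sum2_congr F _ h
    _ = ∑ x, ∑ y, G x y := (sum2_swap G).symm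

lemma sum3_reindex12 (F G : Fin n → Fin n → Fin n → M) (h : ∀ x y z, F x y z = G y x z) :
    (∑ x, ∑ y, ∑ z, F x y z) = ∑ x, ∑ y, ∑ z, G x y z := by
  calc (∑ x, ∑ y, ∑ z, F x y z) = ∑ x, ∑ y, ∑ z, G y x z := sum3_congr F _ h
    _ = ∑ x, ∑ y, ∑ z, G x y z := Finset.sum_comm

lemma sum3_reindex13 (F G : Fin n → Fin n → Fin n → M) (h : ∀ x y z, F x y z = G z y x) :
    (∑ x, ∑ y, ∑ z, F x y z) = ∑ x, ∑ y, ∑ z, G x y z := by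
  calc (∑ x, ∑ y, ∑ z, F x y z) = ∑ x, ∑ y, ∑ z, G z y x := sum3_congr F _ h
    _ = ∑ x, ∑ y, ∑ z, G x y z := (sum3_swap13 G).symm

lemma sum3_reindex23 (F G : Fin n → Fin n → Fin n → M) (h : ∀ x y z, F x y z = G x z y) :
    (∑ x, ∑ y, ∑ z, F x y z) = ∑ x, ∑ y, ∑ z, G x y z := by
  calc (∑ x, ∑ y, ∑ z, F x y z) = ∑ x, ∑ y, ∑ z, G x z y := sum3_congr F _ h
    _ = ∑ x, ∑ y, ∑ z, G x y z := (sum3_swap23 G).symm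

end Reindex

end Phi

end Aux

set_option maxHeartbeats 2000000 in
/-- for `Ω¹` the free module with basis `θ^k`, `∇_j θ^i = −Γ^i_{jk} θ^k`,
commuting derivations and Poisson-compatible `(ω, Γ)`, the quantised connection obeys the
left Leibniz rule `∇_{Q(E)}(a • e) = d(a) ⊗ e + a • ∇_{Q(E)}(e)`, and `σ_{Q(E)}` is an
`A₁`-bimodule map with `∇_{Q(E)}(e • a) = ∇_{Q(E)}(e) • a + σ_{Q(E)}(e ⊗ d(a))`.
(All identities are transported through the isomorphism `q_{Ω¹,E}`.) -/
theorem statement_5 (D : DefData K A n) (Γ : Fin n → Fin n → Fin n → A)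
    {E : Type} [AddCommGroup E] [Module A E]
    (LΩ : LeibMod D (Fin n → A))
    (hLΩ : ∀ (j : Fin n) (ξ : Fin n → A) (k : Fin n),
      LΩ.nab j ξ k = D.δ j (ξ k) - ∑ i, ξ i * Γ i j k)
    (LE : LeibMod D E)
    (LT : LeibMod D ((Fin n → A) ⊗[A] E))
    (hLT : ∀ (j : Fin n) (ξ : Fin n → A) (e : E),
      LT.nab j (ξ ⊗ₜ[A] e) = LΩ.nab j ξ ⊗ₜ[A] e + ξ ⊗ₜ[A] LE.nab j e)
    (hcomm : ∀ (i j : Fin n) (a : A), D.δ i (D.δ j a) = D.δ j (D.δ i a))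
    (hpc : ∀ i j m : Fin n,
      D.δ m (D.ω i j) + ∑ k, D.ω k j * Γ i k m + ∑ k, D.ω i k * Γ j k m = 0) :
    (∀ (a : A × A) (e : E × E),
        Nrep LE (lact LE a e)
          = qpair LΩ LE (dfun D a.1, dfun D a.2) e + lact LT a (Nrep LE e)) ∧
    (∀ (e : E × E) (a : A × A) (ξ : (Fin n → A) × (Fin n → A)),
        SigmaRep LΩ LE (ract LE e a) ξ = SigmaRep LΩ LE e (lact LΩ a ξ)) ∧
    (∀ (a : A × A) (e : E × E) (ξ : (Fin n → A) × (Fin n → A)),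
        SigmaRep LΩ LE (lact LE a e) ξ = lact LT a (SigmaRep LΩ LE e ξ)) ∧
    (∀ (e : E × E) (ξ : (Fin n → A) × (Fin n → A)) (a : A × A),
        SigmaRep LΩ LE e (ract LΩ ξ a) = ract LT (SigmaRep LΩ LE e ξ) a) ∧
    (∀ (e : E × E) (a : A × A),
        Nrep LE (ract LE e a)
          = ract LT (Nrep LE e) a + SigmaRep LΩ LE e (dfun D a.1, dfun D a.2)) := by
  classical
  refine ⟨?_, ?_, ?_, ?_, ?_⟩
  · intro a e
    refine Prod.ext (tensor_ext fun m => ?_) (tensor_ext fun m => ?_)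
    · simp only [Nrep, lact, qpair, Prod.fst_add, map_add, map_sum, map_sub, map_smul,
        phi_tmul, phi_sum_theta, sum_theta_smul, LE.nab_smul, dfun]
      abel
    · simp only [Nrep, lact, qpair, Prod.snd_add, Prod.fst_add, map_add, map_sum, map_sub, map_smul,
        phi_tmul, phi_sum_theta, LE.nab_smul, LE.nab_add, nab_sum, nab_sub, dfun,
        hLT, Finset.sum_add_distrib, Finset.sum_sub_distrib, sum_theta_smul, sum_ite_smul, hLΩ, theta_apply,
        δ_ite, ite_mul, one_mul, zero_mul, Finset.sum_ite_eq, Finset.sum_ite_eq', Finset.mem_univ, if_true, zero_sub]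
      simp only [smul_add, smul_sub, smul_smul, smul_neg, neg_smul, Finset.smul_sum,
        Finset.sum_add_distrib, Finset.sum_sub_distrib, Finset.sum_neg_distrib,
        D.δ_leibniz, δ_half, δ_zero, mul_zero, zero_mul, add_zero, zero_add,
        show ∀ (x : Fin n) (b : A), D.δ m (D.δ x b) = D.δ x (D.δ m b) from fun x b => hcomm m x b]
      have hpc' : ∀ x y : Fin n, D.δ m (D.ω x y)
          = -∑ z, D.ω z y * Γ x z m - ∑ z, D.ω x z * Γ y z m := by
        intro x y; have h := hpc x y m; linear_combination h
      simp only [hpc', mul_sub, mul_neg, mul_add, sub_smul, neg_smul, add_smul, smul_smul,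
        Finset.mul_sum, Finset.sum_smul, Finset.sum_sub_distrib, Finset.sum_add_distrib,
        Finset.sum_neg_distrib, sub_eq_add_neg, neg_add, neg_neg]
      simp only [mul_comm, mul_assoc, mul_left_comm]
      rw [show (∑ x : Fin n, ∑ x_1 : Fin n, ∑ x_2 : Fin n,
            (Γ x_2 x m * (half K A * (D.δ x_2 a.1 * D.ω x x_1))) • LE.nab x_1 e.1)
          = ∑ x : Fin n, ∑ x_1 : Fin n, ∑ x_2 : Fin n,
            (Γ x x_2 m * (half K A * (D.δ x a.1 * D.ω x_2 x_1))) • LE.nab x_1 e.1 from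
        sum3_swap13 _]
      rw [show (∑ x : Fin n, ∑ x_1 : Fin n, ∑ x_2 : Fin n,
            (Γ x_2 x_1 m * (half K A * (D.δ x a.1 * D.ω x x_1))) • LE.nab x_2 e.1)
          = ∑ x : Fin n, ∑ x_1 : Fin n, ∑ x_2 : Fin n,
            (Γ x_1 x_2 m * (half K A * (D.δ x a.1 * D.ω x x_2))) • LE.nab x_1 e.1 from
        sum3_swap23 _]
      abel
  · intro e a ξ
    refine Prod.ext (tensor_ext fun m => ?_) (tensor_ext fun m => ?_)
    · simp only [SigmaRep, qpair, ract, lact, Prod.fst_add, Prod.snd_add, add_zero,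
        map_add, map_sum, map_sub, map_smul, phi_tmul, phi_sum_theta,
        LE.nab_smul, LE.nab_add, nab_sum, nab_sub, dfun, hLT,
        Finset.sum_add_distrib, Finset.sum_sub_distrib, sum_theta_smul, sum_ite_smul,
        hLΩ, theta_apply, δ_ite, ite_mul, one_mul, zero_mul,
        Finset.sum_ite_eq, Finset.sum_ite_eq', Finset.mem_univ, if_true, zero_sub,
        Pi.smul_apply, Pi.add_apply, Pi.sub_apply, Finset.sum_apply, smul_eq_mul,
        D.δ_add, D.δ_leibniz, δ_half, δ_zero, mul_zero, zero_mul, add_zero, zero_add]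
      module
    · simp only [SigmaRep, qpair, ract, lact, Prod.fst_add, Prod.snd_add, add_zero,
        map_add, map_sum, map_sub, map_smul, phi_tmul, phi_sum_theta,
        LE.nab_smul, LE.nab_add, nab_sum, nab_sub, dfun, hLT,
        Finset.sum_add_distrib, Finset.sum_sub_distrib, sum_theta_smul, sum_ite_smul,
        hLΩ, theta_apply, δ_ite, ite_mul, one_mul, zero_mul,
        Finset.sum_ite_eq, Finset.sum_ite_eq', Finset.mem_univ, if_true, zero_sub,
        ite_one_smul, smul_ite, smul_zero,
        Pi.smul_apply, Pi.add_apply, Pi.sub_apply, Finset.sum_apply, smul_eq_mul,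
        D.δ_add, D.δ_leibniz, δ_half, δ_zero, mul_zero, zero_mul, add_zero, zero_add,
        show ∀ (x : Fin n) (b : A), D.δ m (D.δ x b) = D.δ x (D.δ m b) from fun x b => hcomm m x b]
      simp only [smul_add, smul_sub, smul_smul, smul_neg, neg_smul, Finset.smul_sum,
        mul_sub, mul_neg, mul_add, add_mul, sub_mul, neg_mul, sub_smul, add_smul,
        Finset.mul_sum, Finset.sum_mul, Finset.sum_smul,
        Finset.sum_add_distrib, Finset.sum_sub_distrib, Finset.sum_neg_distrib,
        sub_eq_add_neg, neg_add, neg_neg]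
      simp only [mul_comm, mul_assoc, mul_left_comm]
      rw [sum2_reindex
          (fun x y => (D.δ y a.1 * (ξ.1 m * D.ω x y)) • LE.nab x e.1)
          (fun x y => -((half K A * (D.δ x a.1 * (ξ.1 m * D.ω x y))) • LE.nab y e.1
            + (half K A * (D.δ x a.1 * (ξ.1 m * D.ω x y))) • LE.nab y e.1))
          (fun x y => by
            rw [D.ω_anti y x]
            match_scalars
            linear_combination (-(D.δ y a.1 * (ξ.1 m * D.ω x y))) * two_mul_half (K := K) (A := A))]
      rw [sum2_reindex
          (fun x y => (half K A * (D.δ y a.1 * (D.δ x (ξ.1 m) * D.ω x y))) • e.1)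
          (fun x y => -((half K A * (D.δ x a.1 * (D.δ y (ξ.1 m) * D.ω x y))) • e.1))
          (fun x y => by rw [D.ω_anti y x]; module)]
      rw [sum2_congr
          (fun x y => (D.δ x a.1 * (D.δ y (ξ.1 m) * D.ω x y)) • e.1)
          (fun x y => (half K A * (D.δ x a.1 * (D.δ y (ξ.1 m) * D.ω x y))) • e.1
            + (half K A * (D.δ x a.1 * (D.δ y (ξ.1 m) * D.ω x y))) • e.1)
          (fun x y => by
            match_scalars
            linear_combination (-(D.δ x a.1 * (D.δ y (ξ.1 m) * D.ω x y))) * two_mul_half (K := K) (A := A))]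
      rw [sum3_reindex12
          (fun x y z => (Γ z x m * (half K A * (D.δ y a.1 * (ξ.1 z * D.ω x y)))) • e.1)
          (fun x y z => -((Γ z y m * (half K A * (D.δ x a.1 * (ξ.1 z * D.ω x y)))) • e.1))
          (fun x y z => by rw [D.ω_anti y x]; module)]
      rw [sum3_congr
          (fun x y z => (Γ z y m * (D.δ x a.1 * (ξ.1 z * D.ω x y))) • e.1)
          (fun x y z => (Γ z y m * (half K A * (D.δ x a.1 * (ξ.1 z * D.ω x y)))) • e.1
            + (Γ z y m * (half K A * (D.δ x a.1 * (ξ.1 z * D.ω x y)))) • e.1)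
          (fun x y z => by
            match_scalars
            linear_combination (-(Γ z y m * (D.δ x a.1 * (ξ.1 z * D.ω x y)))) * two_mul_half (K := K) (A := A))]
      simp only [Finset.sum_add_distrib, Finset.sum_neg_distrib, neg_add, neg_neg]
      abel
  · intro a e ξ
    refine Prod.ext (tensor_ext fun m => ?_) (tensor_ext fun m => ?_)
    · simp only [SigmaRep, qpair, ract, lact, Prod.fst_add, Prod.snd_add, add_zero,
        map_add, map_sum, map_sub, map_smul, phi_tmul, phi_sum_theta,
        LE.nab_smul, LE.nab_add, nab_sum, nab_sub, dfun, hLT,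
        Finset.sum_add_distrib, Finset.sum_sub_distrib, sum_theta_smul, sum_ite_smul,
        hLΩ, theta_apply, δ_ite, ite_mul, one_mul, zero_mul,
        Finset.sum_ite_eq, Finset.sum_ite_eq', Finset.mem_univ, if_true, zero_sub,
        Pi.smul_apply, Pi.add_apply, Pi.sub_apply, Finset.sum_apply, smul_eq_mul,
        D.δ_add, D.δ_leibniz, δ_half, δ_zero, mul_zero, zero_mul, add_zero, zero_add]
      module
    · simp only [SigmaRep, qpair, ract, lact, Prod.fst_add, Prod.snd_add, add_zero,
        map_add, map_sum, map_sub, map_smul, phi_tmul, phi_sum_theta,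
        LE.nab_smul, LE.nab_add, nab_sum, nab_sub, dfun, hLT,
        Finset.sum_add_distrib, Finset.sum_sub_distrib, sum_theta_smul, sum_ite_smul,
        hLΩ, theta_apply, δ_ite, ite_mul, one_mul, zero_mul,
        Finset.sum_ite_eq, Finset.sum_ite_eq', Finset.mem_univ, if_true, zero_sub,
        ite_one_smul, smul_ite, smul_zero,
        Pi.smul_apply, Pi.add_apply, Pi.sub_apply, Finset.sum_apply, smul_eq_mul,
        D.δ_add, D.δ_leibniz, δ_half, δ_zero, mul_zero, zero_mul, add_zero, zero_add,
        show ∀ (x : Fin n) (b : A), D.δ m (D.δ x b) = D.δ x (D.δ m b) from fun x b => hcomm m x b]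
      simp only [smul_add, smul_sub, smul_smul, smul_neg, neg_smul, Finset.smul_sum,
        mul_sub, mul_neg, mul_add, add_mul, sub_mul, neg_mul, sub_smul, add_smul,
        Finset.mul_sum, Finset.sum_mul, Finset.sum_smul,
        Finset.sum_add_distrib, Finset.sum_sub_distrib, Finset.sum_neg_distrib,
        sub_eq_add_neg, neg_add, neg_neg]
      simp only [mul_comm, mul_assoc, mul_left_comm]
      rw [sum2_reindex
          (fun x y => (half K A * (D.δ y a.1 * (D.δ x (ξ.1 m) * D.ω x y))) • e.1)
          (fun x y => -((half K A * (D.δ x a.1 * (D.δ y (ξ.1 m) * D.ω x y))) • e.1))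
          (fun x y => by rw [D.ω_anti y x]; module)]
      rw [sum2_congr
          (fun x y => (D.δ x a.1 * (D.δ y (ξ.1 m) * D.ω x y)) • e.1)
          (fun x y => (half K A * (D.δ x a.1 * (D.δ y (ξ.1 m) * D.ω x y))) • e.1
            + (half K A * (D.δ x a.1 * (D.δ y (ξ.1 m) * D.ω x y))) • e.1)
          (fun x y => by
            match_scalars
            linear_combination (-(D.δ x a.1 * (D.δ y (ξ.1 m) * D.ω x y))) * two_mul_half (K := K) (A := A))]
      rw [sum3_reindex12
          (fun x y z => (Γ z x m * (half K A * (D.δ y a.1 * (ξ.1 z * D.ω x y)))) • e.1)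
          (fun x y z => -((Γ z y m * (half K A * (D.δ x a.1 * (ξ.1 z * D.ω x y)))) • e.1))
          (fun x y z => by rw [D.ω_anti y x]; module)]
      rw [sum3_congr
          (fun x y z => (Γ z y m * (D.δ x a.1 * (ξ.1 z * D.ω x y))) • e.1)
          (fun x y z => (Γ z y m * (half K A * (D.δ x a.1 * (ξ.1 z * D.ω x y)))) • e.1
            + (Γ z y m * (half K A * (D.δ x a.1 * (ξ.1 z * D.ω x y)))) • e.1)
          (fun x y z => by
            match_scalars
            linear_combination (-(Γ z y m * (D.δ x a.1 * (ξ.1 z * D.ω x y)))) * two_mul_half (K := K) (A := A))]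
      simp only [Finset.sum_add_distrib, Finset.sum_neg_distrib, neg_add, neg_neg]
      abel
  · intro e ξ a
    refine Prod.ext (tensor_ext fun m => ?_) (tensor_ext fun m => ?_)
    · simp only [SigmaRep, qpair, ract, lact, Prod.fst_add, Prod.snd_add, add_zero,
        map_add, map_sum, map_sub, map_smul, phi_tmul, phi_sum_theta,
        LE.nab_smul, LE.nab_add, nab_sum, nab_sub, dfun, hLT,
        Finset.sum_add_distrib, Finset.sum_sub_distrib, sum_theta_smul, sum_ite_smul,
        hLΩ, theta_apply, δ_ite, ite_mul, one_mul, zero_mul,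
        Finset.sum_ite_eq, Finset.sum_ite_eq', Finset.mem_univ, if_true, zero_sub,
        Pi.smul_apply, Pi.add_apply, Pi.sub_apply, Finset.sum_apply, smul_eq_mul,
        D.δ_add, D.δ_leibniz, δ_half, δ_zero, mul_zero, zero_mul, add_zero, zero_add]
      module
    · simp only [SigmaRep, qpair, ract, lact, Prod.fst_add, Prod.snd_add, add_zero,
        map_add, map_sum, map_sub, map_smul, phi_tmul, phi_sum_theta,
        LE.nab_smul, LE.nab_add, nab_sum, nab_sub, dfun, hLT,
        Finset.sum_add_distrib, Finset.sum_sub_distrib, sum_theta_smul, sum_ite_smul,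
        hLΩ, theta_apply, δ_ite, ite_mul, one_mul, zero_mul,
        Finset.sum_ite_eq, Finset.sum_ite_eq', Finset.mem_univ, if_true, zero_sub,
        ite_one_smul, smul_ite, smul_zero,
        Pi.smul_apply, Pi.add_apply, Pi.sub_apply, Finset.sum_apply, smul_eq_mul,
        D.δ_add, D.δ_leibniz, δ_half, δ_zero, mul_zero, zero_mul, add_zero, zero_add,
        show ∀ (x : Fin n) (b : A), D.δ m (D.δ x b) = D.δ x (D.δ m b) from fun x b => hcomm m x b]
      simp only [smul_add, smul_sub, smul_smul, smul_neg, neg_smul, Finset.smul_sum,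
        mul_sub, mul_neg, mul_add, add_mul, sub_mul, neg_mul, sub_smul, add_smul,
        Finset.mul_sum, Finset.sum_mul, Finset.sum_smul,
        Finset.sum_add_distrib, Finset.sum_sub_distrib, Finset.sum_neg_distrib,
        sub_eq_add_neg, neg_add, neg_neg]
      simp only [mul_comm, mul_assoc, mul_left_comm]
      rw [sum2_reindex
          (fun x y => (D.δ y a.1 * (ξ.1 m * D.ω x y)) • LE.nab x e.1)
          (fun x y => -((half K A * (D.δ x a.1 * (ξ.1 m * D.ω x y))) • LE.nab y e.1
            + (half K A * (D.δ x a.1 * (ξ.1 m * D.ω x y))) • LE.nab y e.1))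
          (fun x y => by
            rw [D.ω_anti y x]
            match_scalars
            linear_combination (-(D.δ y a.1 * (ξ.1 m * D.ω x y))) * two_mul_half (K := K) (A := A))]
      simp only [Finset.sum_add_distrib, Finset.sum_neg_distrib, neg_add, neg_neg]
      abel
  · intro e a
    refine Prod.ext (tensor_ext fun m => ?_) (tensor_ext fun m => ?_)
    · simp only [Nrep, SigmaRep, qpair, ract, lact, Prod.fst_add, Prod.snd_add, add_zero,
        map_add, map_sum, map_sub, map_smul, phi_tmul, phi_sum_theta,
        LE.nab_smul, LE.nab_add, nab_sum, nab_sub, dfun, hLT,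
        Finset.sum_add_distrib, Finset.sum_sub_distrib, sum_theta_smul, sum_ite_smul,
        hLΩ, theta_apply, δ_ite, ite_mul, one_mul, zero_mul,
        Finset.sum_ite_eq, Finset.sum_ite_eq', Finset.mem_univ, if_true, zero_sub,
        Pi.smul_apply, Pi.add_apply, Pi.sub_apply, Finset.sum_apply, smul_eq_mul,
        D.δ_add, D.δ_leibniz, δ_half, δ_zero, mul_zero, zero_mul, add_zero, zero_add]
    · simp only [Nrep, SigmaRep, qpair, ract, lact, Prod.fst_add, Prod.snd_add, add_zero,
        map_add, map_sum, map_sub, map_smul, phi_tmul, phi_sum_theta,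
        LE.nab_smul, LE.nab_add, nab_sum, nab_sub, dfun, hLT,
        Finset.sum_add_distrib, Finset.sum_sub_distrib, sum_theta_smul, sum_ite_smul,
        hLΩ, theta_apply, δ_ite, ite_mul, one_mul, zero_mul,
        Finset.sum_ite_eq, Finset.sum_ite_eq', Finset.mem_univ, if_true, zero_sub,
        ite_one_smul, smul_ite, smul_zero,
        Pi.smul_apply, Pi.add_apply, Pi.sub_apply, Finset.sum_apply, smul_eq_mul,
        D.δ_add, D.δ_leibniz, δ_half, δ_zero, mul_zero, zero_mul, add_zero, zero_add,
        show ∀ (x : Fin n) (b : A), D.δ m (D.δ x b) = D.δ x (D.δ m b) from fun x b => hcomm m x b]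
      simp only [smul_add, smul_sub, smul_smul, smul_neg, neg_smul, Finset.smul_sum,
        mul_sub, mul_neg, mul_add, add_mul, sub_mul, neg_mul, sub_smul, add_smul,
        Finset.mul_sum, Finset.sum_mul, Finset.sum_smul,
        Finset.sum_add_distrib, Finset.sum_sub_distrib, Finset.sum_neg_distrib,
        sub_eq_add_neg, neg_add, neg_neg]
      have hpc' : ∀ x y : Fin n, D.δ m (D.ω x y)
          = -∑ z, D.ω z y * Γ x z m - ∑ z, D.ω x z * Γ y z m := by
        intro x y; have h := hpc x y m; linear_combination h
      simp only [hpc', mul_sub, mul_neg, mul_add, add_mul, sub_mul, neg_mul, sub_smul,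
        neg_smul, add_smul, smul_smul, Finset.mul_sum, Finset.sum_mul, Finset.sum_smul,
        Finset.sum_sub_distrib, Finset.sum_add_distrib,
        Finset.sum_neg_distrib, sub_eq_add_neg, neg_add, neg_neg]
      simp only [mul_comm, mul_assoc, mul_left_comm]
      rw [sum2_reindex
          (fun x y => (D.δ y a.1 * D.ω x y) • LE.nab x (LE.nab m e.1))
          (fun x y => -((half K A * (D.δ x a.1 * D.ω x y)) • LE.nab y (LE.nab m e.1)
            + (half K A * (D.δ x a.1 * D.ω x y)) • LE.nab y (LE.nab m e.1)))
          (fun x y => by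
            rw [D.ω_anti y x]
            match_scalars
            linear_combination (-(D.δ y a.1 * D.ω x y)) * two_mul_half (K := K) (A := A))]
      rw [sum2_reindex
          (fun x y => (D.δ y a.1 * D.ω x y) • LE.nab m (LE.nab x e.1))
          (fun x y => -((half K A * (D.δ x a.1 * D.ω x y)) • LE.nab m (LE.nab y e.1)
            + (half K A * (D.δ x a.1 * D.ω x y)) • LE.nab m (LE.nab y e.1)))
          (fun x y => by
            rw [D.ω_anti y x]
            match_scalars
            linear_combination (-(D.δ y a.1 * D.ω x y)) * two_mul_half (K := K) (A := A))]
      rw [sum2_reindex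
          (fun x y => (D.δ y (D.δ m a.1) * D.ω x y) • LE.nab x e.1)
          (fun x y => -((half K A * (D.δ x (D.δ m a.1) * D.ω x y)) • LE.nab y e.1
            + (half K A * (D.δ x (D.δ m a.1) * D.ω x y)) • LE.nab y e.1))
          (fun x y => by
            rw [D.ω_anti y x]
            match_scalars
            linear_combination (-(D.δ y (D.δ m a.1) * D.ω x y)) * two_mul_half (K := K) (A := A))]
      rw [sum3_reindex23
          (fun x y z => (Γ z y m * (half K A * (D.δ x a.1 * D.ω x y))) • LE.nab z e.1)
          (fun x y z => (Γ y z m * (half K A * (D.δ x a.1 * D.ω x z))) • LE.nab y e.1)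
          (fun x y z => rfl)]
      rw [sum3_reindex13
          (fun x y z => (Γ z x m * (half K A * (D.δ z a.1 * D.ω x y))) • LE.nab y e.1)
          (fun x y z => (Γ x z m * (half K A * (D.δ x a.1 * D.ω z y))) • LE.nab y e.1)
          (fun x y z => rfl)]
      rw [sum3_reindex13
          (fun x y z => (Γ z y m * (D.δ z a.1 * D.ω x y)) • LE.nab x e.1)
          (fun x y z => (Γ x y m * (D.δ x a.1 * D.ω z y)) • LE.nab z e.1)
          (fun x y z => rfl)]
      rw [sum3_reindex23
          (fun x y z => (Γ x y m * (D.δ x a.1 * D.ω z y)) • LE.nab z e.1)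
          (fun x y z => (Γ x z m * (D.δ x a.1 * D.ω y z)) • LE.nab y e.1)
          (fun x y z => rfl)]
      rw [sum3_congr
          (fun x y z => (Γ x z m * (D.δ x a.1 * D.ω y z)) • LE.nab y e.1)
          (fun x y z => -((Γ x z m * (half K A * (D.δ x a.1 * D.ω z y))) • LE.nab y e.1
            + (Γ x z m * (half K A * (D.δ x a.1 * D.ω z y))) • LE.nab y e.1))
          (fun x y z => by
            rw [D.ω_anti y z]
            match_scalars
            linear_combination (Γ x z m * (D.δ x a.1 * D.ω z y)) * two_mul_half (K := K) (A := A))]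
      simp only [Finset.sum_add_distrib, Finset.sum_neg_distrib, neg_add, neg_neg]
      abel

end Stmt5
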